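/- Let Δ̃⁺ be the set of positive roots of a polarization of a finite reduced crystallographic root system Δ, with simple roots ε₁, …, ε_n. Suppose i₁, …, i_N ∈ {1, …, n} are indices such that α := ε_{i₁} + ε_{i₂} + ⋯ + ε_{i_N} ∈ Δ̃⁺. Then for every 1 ≤ k ≤ N there exists a permutation σ of {1, …, N} with σ(1) = k such that the partial sums η_r := ε_{i_{σ(1)}} + ⋯ + ε_{i_{σ(r)}} belong to Δ̃⁺ for all 1 ≤ r ≤ N. -/

import Mathlib

open RealInnerProductSpace

variable {V : Type*} [NormedAddCommGroup V] [InnerProductSpace ℝ V]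
  [FiniteDimensional ℝ V]

/-- A finite reduced crystallographic root system in a real inner product
space: a finite set of nonzero vectors, stable under the reflections `s_α`,
with integral pairings `2(β,α)/(α,α)`, and such that the only scalar multiples
of a root which are roots are `±` that root. -/
structure IsRootSystem (Δ : Set V) : Prop where
  finite : Δ.Finite
  ne_zero : ∀ α ∈ Δ, α ≠ 0
  reflect_mem : ∀ α ∈ Δ, ∀ β ∈ Δ, β - (2 * ⟪β, α⟫ / ⟪α, α⟫) • α ∈ Δ
  crystallographic : ∀ α ∈ Δ, ∀ β ∈ Δ, ∃ n : ℤ, (n : ℝ) = 2 * ⟪β, α⟫ / ⟪α, α⟫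
  reduced : ∀ α ∈ Δ, ∀ t : ℝ, t • α ∈ Δ → t = 1 ∨ t = -1

lemma inner_self_pos' {x : V} (hx : x ≠ 0) : 0 < ⟪x, x⟫ :=
  lt_of_le_of_ne real_inner_self_nonneg (Ne.symm (inner_self_ne_zero.mpr hx))

lemma RS.neg_mem {Δ : Set V} (hΔ : IsRootSystem Δ) {α : V} (hα : α ∈ Δ) : -α ∈ Δ := by
  have h := hΔ.reflect_mem α hα α hα
  have h0 : ⟪α, α⟫ ≠ 0 := inner_self_ne_zero.mpr (hΔ.ne_zero α hα)
  rw [mul_div_assoc, div_self h0, mul_one] at h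
  convert h using 1
  module

lemma RS.sub_mem {Δ : Set V} (hΔ : IsRootSystem Δ) {α β : V} (hα : α ∈ Δ) (hβ : β ∈ Δ)
    (hpos : 0 < ⟪α, β⟫) (hne : α ≠ β) : α - β ∈ Δ := by
  have hα0 := hΔ.ne_zero α hα
  have hβ0 := hΔ.ne_zero β hβ
  have hαα := inner_self_pos' hα0
  have hββ := inner_self_pos' hβ0
  by_cases hprop : ∃ t : ℝ, α = t • β
  · obtain ⟨t, rfl⟩ := hprop
    rcases hΔ.reduced β hβ t hα with rfl | rfl
    · exact absurd (one_smul ℝ β) hne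
    · rw [real_inner_smul_left] at hpos; nlinarith
  · -- strict Cauchy-Schwarz
    have hCS : ⟪α, β⟫ < ‖α‖ * ‖β‖ := by
      rw [inner_lt_norm_mul_iff_real]
      intro hcontra
      apply hprop
      have hβn : ‖β‖ ≠ 0 := norm_ne_zero_iff.mpr hβ0
      refine ⟨‖α‖ / ‖β‖, ?_⟩
      have := congrArg (fun v => (‖β‖)⁻¹ • v) hcontra
      simp only [smul_smul, inv_mul_cancel₀ hβn, one_smul] at this
      rw [div_eq_inv_mul]; exact this
    have hsq : ⟪α, β⟫ * ⟪α, β⟫ < ⟪α, α⟫ * ⟪β, β⟫ := by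
      rw [real_inner_self_eq_norm_mul_norm, real_inner_self_eq_norm_mul_norm]
      nlinarith [hpos]
    obtain ⟨m, hm⟩ := hΔ.crystallographic β hβ α hα
    obtain ⟨q, hq⟩ := hΔ.crystallographic α hα β hβ
    -- hm : (m:ℝ) = 2 * ⟪α, β⟫ / ⟪β, β⟫,  hq : (q:ℝ) = 2 * ⟪β, α⟫ / ⟪α, α⟫
    have hsym : ⟪β, α⟫ = ⟪α, β⟫ := real_inner_comm α β
    have hm' : (m : ℝ) * ⟪β, β⟫ = 2 * ⟪α, β⟫ := by
      field_simp at hm; linarith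
    have hq' : (q : ℝ) * ⟪α, α⟫ = 2 * ⟪β, α⟫ := by
      field_simp at hq; linarith
    have hmpos : 0 < m := by
      by_contra h
      push_neg at h
      have : (m : ℝ) ≤ 0 := by exact_mod_cast h
      nlinarith
    have hqpos : 0 < q := by
      by_contra h
      push_neg at h
      have : (q : ℝ) ≤ 0 := by exact_mod_cast h
      nlinarith
    have hmq : m * q < 4 := by
      have : ((m : ℝ)) * q < 4 := by
        have h1 : (m : ℝ) * ⟪β, β⟫ * ((q : ℝ) * ⟪α, α⟫) = 4 * (⟪α, β⟫ * ⟪α, β⟫) := by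
          rw [hm', hq', hsym]; ring
        nlinarith
      exact_mod_cast this
    have : m = 1 ∨ q = 1 := by
      rcases lt_or_ge m 2 with h | h
      · left; omega
      · right; nlinarith
    rcases this with h1 | h1
    · have := hΔ.reflect_mem β hβ α hα
      rw [← hm, h1] at this
      simpa using this
    · have := hΔ.reflect_mem α hα β hβ
      rw [← hq, h1] at this
      have h2 := RS.neg_mem hΔ this
      simpa using h2

/-- An element of a set `P` of positive roots is *simple* if it is not the sum
of two elements of `P`. -/
def IsSimpleRoot (P : Set V) (α : V) : Prop :=
  α ∈ P ∧ ¬ ∃ β ∈ P, ∃ γ ∈ P, α = β + γ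

section Simple

variable {Δ : Set V} (hΔ : IsRootSystem Δ) {f : V →ₗ[ℝ] ℝ}
  (hf : ∀ α ∈ Δ, f α ≠ 0) {P : Set V} (hP : P = {α | α ∈ Δ ∧ 0 < f α})

include hΔ hf hP

lemma mem_P_or_neg {γ : V} (hγ : γ ∈ Δ) : γ ∈ P ∨ -γ ∈ P := by
  subst hP
  rcases lt_or_gt_of_ne (hf γ hγ) with h | h
  · right
    exact ⟨RS.neg_mem hΔ hγ, by simpa using h⟩
  · left; exact ⟨hγ, h⟩

lemma simple_inner_nonpos {a b : V} (ha : IsSimpleRoot P a) (hb : IsSimpleRoot P b)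
    (hab : a ≠ b) : ⟪a, b⟫ ≤ 0 := by
  by_contra h
  push_neg at h
  have haΔ : a ∈ Δ := by rw [hP] at ha; exact ha.1.1
  have hbΔ : b ∈ Δ := by rw [hP] at hb; exact hb.1.1
  have hδ : a - b ∈ Δ := RS.sub_mem hΔ haΔ hbΔ h hab
  rcases mem_P_or_neg hΔ hf hP hδ with hδP | hδP
  · exact ha.2 ⟨b, hb.1, a - b, hδP, by abel⟩
  · rw [neg_sub] at hδP
    exact hb.2 ⟨a, ha.1, b - a, hδP, by abel⟩

end Simple

lemma RS.add_mem {Δ : Set V} (hΔ : IsRootSystem Δ) {x y : V} (hx : x ∈ Δ) (hy : y ∈ Δ)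
    (hneg : ⟪x, y⟫ < 0) (hne : x ≠ -y) : x + y ∈ Δ := by
  have h1 : 0 < ⟪x, -y⟫ := by rw [inner_neg_right]; linarith
  have := RS.sub_mem hΔ hx (RS.neg_mem hΔ hy) h1 hne
  simpa using this

section Main

variable {Δ : Set V} (hΔ : IsRootSystem Δ) {f : V →ₗ[ℝ] ℝ}
  (hf : ∀ α ∈ Δ, f α ≠ 0) {P : Set V} (hP : P = {α | α ∈ Δ ∧ 0 < f α})
  {n : ℕ} {ε : Fin n → V} (hsimple : ∀ j : Fin n, IsSimpleRoot P (ε j))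

include hΔ hf hP hsimple

lemma step_exists {N : ℕ} (i : Fin N → Fin n) (η : V) (hη : η ∈ P)
    (R : Finset (Fin N)) (hRne : R.Nonempty)
    (hsum : (η + ∑ m ∈ R, ε (i m)) ∈ P) :
    ∃ t ∈ R, η + ε (i t) ∈ P := by
  have hPmem : ∀ x, x ∈ P ↔ x ∈ Δ ∧ 0 < f x := by
    intro x; rw [hP]; rfl
  have hεP : ∀ j : Fin n, ε j ∈ P := fun j => (hsimple j).1
  have hεΔ : ∀ j : Fin n, ε j ∈ Δ := fun j => ((hPmem _).mp (hεP j)).1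
  have hεf : ∀ j : Fin n, 0 < f (ε j) := fun j => ((hPmem _).mp (hεP j)).2
  induction R using Finset.strongInduction with
  | _ R IH =>
  by_contra hcon
  push_neg at hcon
  set β := ∑ m ∈ R, ε (i m) with hβ
  set α := η + β with hα
  have hηΔ : η ∈ Δ := ((hPmem _).mp hη).1
  have hηf : 0 < f η := ((hPmem _).mp hη).2
  have hαΔ : α ∈ Δ := ((hPmem _).mp hsum).1
  have h1 : ∀ t ∈ R, 0 ≤ ⟪η, ε (i t)⟫ := by
    intro t ht
    by_contra hlt
    push_neg at hlt
    have hne' : η ≠ -ε (i t) := by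
      intro hcontra
      have : f η = -f (ε (i t)) := by rw [hcontra]; simp
      have := hεf (i t); linarith
    have hmem : η + ε (i t) ∈ Δ := RS.add_mem hΔ hηΔ (hεΔ (i t)) hlt hne'
    refine hcon t ht ((hPmem _).mpr ⟨hmem, ?_⟩)
    rw [map_add]
    have := hεf (i t); linarith
  have h2 : 0 < f β := by
    rw [hβ, map_sum]
    exact Finset.sum_pos (fun m _ => hεf (i m)) hRne
  have hβ0 : β ≠ 0 := by intro h; rw [h] at h2; simp at h2
  have hinnerβ : ⟪α, β⟫ = ∑ t ∈ R, ⟪α, ε (i t)⟫ := by rw [hβ, inner_sum]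
  have h3 : 0 < ⟪α, β⟫ := by
    have hηβ : 0 ≤ ⟪η, β⟫ := by
      rw [hβ, inner_sum]
      exact Finset.sum_nonneg h1
    have hββ : 0 < ⟪β, β⟫ := inner_self_pos' hβ0
    have : ⟪α, β⟫ = ⟪η, β⟫ + ⟪β, β⟫ := by rw [hα, inner_add_left]
    linarith
  have h4 : ∃ t ∈ R, 0 < ⟪α, ε (i t)⟫ := by
    by_contra h
    push_neg at h
    have := Finset.sum_nonpos h
    rw [← hinnerβ] at this
    linarith
  obtain ⟨t, ht, htpos⟩ := h4
  rcases (R.erase t).eq_empty_or_nonempty with hemp | hne2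
  · have hRt : R = {t} := by
      apply Finset.eq_singleton_iff_unique_mem.mpr
      refine ⟨ht, fun x hx => ?_⟩
      by_contra hxt
      exact absurd (Finset.mem_erase.mpr ⟨hxt, hx⟩) (by rw [hemp]; simp)
    apply hcon t ht
    have : β = ε (i t) := by rw [hβ, hRt, Finset.sum_singleton]
    rw [← this]; exact hsum
  · have herase : β = ε (i t) + ∑ m ∈ R.erase t, ε (i m) := by
      rw [hβ, ← Finset.add_sum_erase _ _ ht]
    have hfe : 0 < ∑ m ∈ R.erase t, f (ε (i m)) :=
      Finset.sum_pos (fun m _ => hεf (i m)) hne2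
    have hαt : α ≠ ε (i t) := by
      intro hcontra
      have h5 : f α = f η + f (ε (i t)) + ∑ m ∈ R.erase t, f (ε (i m)) := by
        rw [hα, herase]; simp only [map_add, map_sum]; ring
      rw [hcontra] at h5
      linarith
    have hsub : α - ε (i t) ∈ Δ := RS.sub_mem hΔ hαΔ (hεΔ (i t)) htpos hαt
    have hsubeq : α - ε (i t) = η + ∑ m ∈ R.erase t, ε (i m) := by
      rw [hα, herase]; abel
    have hsubP : α - ε (i t) ∈ P := by
      refine (hPmem _).mpr ⟨hsub, ?_⟩
      rw [hsubeq, map_add, map_sum]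
      linarith
    rw [hsubeq] at hsubP
    obtain ⟨t', ht', hP'⟩ := IH (R.erase t) (Finset.erase_ssubset ht) hne2 hsubP
    exact hcon t' (Finset.mem_of_mem_erase ht') hP'

end Main

lemma sum_filter_le_castSucc {M : ℕ} (h : Fin (M + 1) → V) (m : Fin M) :
    ∑ j ∈ Finset.univ.filter (fun j => j ≤ Fin.castSucc m), h j
      = ∑ j ∈ Finset.univ.filter (fun j => j ≤ m), h (Fin.castSucc j) := by
  have hset : Finset.univ.filter (fun j => j ≤ Fin.castSucc m)
      = (Finset.univ.filter (fun j => j ≤ m)).map Fin.castSuccEmb := by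
    ext j
    simp only [Finset.mem_filter, Finset.mem_map, Finset.mem_univ, true_and,
      Fin.castSuccEmb, Function.Embedding.coeFn_mk]
    constructor
    · intro hj
      have hj' : j.val ≤ m.val := hj
      refine ⟨⟨j.val, by omega⟩, ?_, ?_⟩
      · exact hj'
      · exact Fin.ext rfl
    · rintro ⟨a, ha, rfl⟩
      have : a.val ≤ m.val := ha
      exact this
  rw [hset, Finset.sum_map]
  rfl

section Build

variable {Δ : Set V} (hΔ : IsRootSystem Δ) {f : V →ₗ[ℝ] ℝ}
  (hf : ∀ α ∈ Δ, f α ≠ 0) {P : Set V} (hP : P = {α | α ∈ Δ ∧ 0 < f α})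
  {n : ℕ} {ε : Fin n → V} (hsimple : ∀ j : Fin n, IsSimpleRoot P (ε j))

include hΔ hf hP hsimple

lemma build {N : ℕ} (i : Fin N → Fin n) (hα : (∑ j, ε (i j)) ∈ P) (k : Fin N) :
    ∀ r : ℕ, ∀ _hr : 0 < r, r ≤ N → ∃ g : Fin r ↪ Fin N, g ⟨0, _hr⟩ = k ∧
      ∀ m : Fin r, (∑ j ∈ Finset.univ.filter (fun j => j ≤ m), ε (i (g j))) ∈ P := by
  intro r
  induction r with
  | zero => omega
  | succ r IH =>
    intro hr hle
    rcases Nat.eq_zero_or_pos r with rfl | hr0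
    · -- base case r + 1 = 1
      refine ⟨⟨fun _ => k, fun a b _ => Fin.ext (by omega)⟩, rfl, ?_⟩
      intro m
      have hfil : Finset.univ.filter (fun j => j ≤ m) = (Finset.univ : Finset (Fin 1)) := by
        ext j
        simp only [Finset.mem_filter, Finset.mem_univ, true_and, Fin.le_def, iff_true]
        omega
      rw [hfil]
      show (∑ j : Fin 1, ε (i k)) ∈ P
      simpa using (hsimple (i k)).1
    · obtain ⟨g, hg0, hgsum⟩ := IH hr0 (by omega)
      -- the full partial sum over Fin r is in P
      have hfull : Finset.univ.filter (fun j => j ≤ (⟨r - 1, by omega⟩ : Fin r))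
          = (Finset.univ : Finset (Fin r)) := by
        ext j
        simp only [Finset.mem_filter, Finset.mem_univ, true_and, Fin.le_def, iff_true]
        have := j.isLt
        omega
      have hη : (∑ j : Fin r, ε (i (g j))) ∈ P := by
        have := hgsum ⟨r - 1, by omega⟩
        rwa [hfull] at this
      set η := ∑ j : Fin r, ε (i (g j)) with hηdef
      set S : Finset (Fin N) := Finset.univ.map g with hSdef
      have hRne : Sᶜ.Nonempty := by
        rw [← Finset.card_pos, Finset.card_compl]
        simp only [hSdef, Finset.card_map, Finset.card_univ, Fintype.card_fin]
        omega
      have hsum' : (η + ∑ m ∈ Sᶜ, ε (i m)) ∈ P := by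
        have h1 : η = ∑ m ∈ S, ε (i m) := by
          rw [hSdef, Finset.sum_map]
          try rfl
        rw [h1, Finset.sum_add_sum_compl]
        exact hα
      obtain ⟨t, ht, htP⟩ := step_exists hΔ hf hP hsimple i η hη Sᶜ hRne hsum'
      have htS : t ∉ S := Finset.mem_compl.mp ht
      -- extend g by t
      refine ⟨⟨fun m => if h : m.val < r then g ⟨m.val, h⟩ else t, ?_⟩, ?_, ?_⟩
      · intro a b hab
        dsimp at hab
        by_cases ha : a.val < r <;> by_cases hb : b.val < r
        · rw [dif_pos ha, dif_pos hb] at hab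
          have h3 : (⟨a.val, ha⟩ : Fin r) = ⟨b.val, hb⟩ := g.injective hab
          rw [Fin.mk.injEq] at h3
          exact Fin.ext h3
        · rw [dif_pos ha, dif_neg hb] at hab
          exact absurd (Finset.mem_map.mpr ⟨_, Finset.mem_univ _, hab⟩) htS
        · rw [dif_neg ha, dif_pos hb] at hab
          exact absurd (Finset.mem_map.mpr ⟨_, Finset.mem_univ _, hab.symm⟩) htS
        · exact Fin.ext (by omega)
      · show (if h : (0 : ℕ) < r then g ⟨0, h⟩ else t) = k
        rw [dif_pos hr0]
        exact hg0
      · intro m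
        show (∑ j ∈ Finset.univ.filter (fun j => j ≤ m),
          ε (i (if h : j.val < r then g ⟨j.val, h⟩ else t))) ∈ P
        by_cases hm : m.val < r
        · have hmeq : m = Fin.castSucc ⟨m.val, hm⟩ := Fin.ext rfl
          rw [hmeq, sum_filter_le_castSucc (fun j => ε (i (if h : j.val < r then g ⟨j.val, h⟩ else t)))]
          have hcong : ∀ j : Fin r,
              ε (i (if h : (Fin.castSucc j).val < r then g ⟨(Fin.castSucc j).val, h⟩ else t))
                = ε (i (g j)) := by
            intro j
            simp only [Fin.coe_castSucc]
            rw [dif_pos j.isLt]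
          rw [Finset.sum_congr rfl (fun j _ => hcong j)]
          exact hgsum ⟨m.val, hm⟩
        · -- m = last
          have hfil2 : Finset.univ.filter (fun j => j ≤ m)
              = (Finset.univ : Finset (Fin (r+1))) := by
            ext j
            simp only [Finset.mem_filter, Finset.mem_univ, true_and, Fin.le_def, iff_true]
            have := j.isLt
            have := m.isLt
            omega
          rw [hfil2, Fin.sum_univ_castSucc
            (f := fun j => ε (i (if h : j.val < r then g ⟨j.val, h⟩ else t)))]
          have h1 : ∀ j : Fin r,
              ε (i (if h : (Fin.castSucc j).val < r then g ⟨(Fin.castSucc j).val, h⟩ else t))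
                = ε (i (g j)) := by
            intro j
            simp only [Fin.coe_castSucc]
            rw [dif_pos j.isLt]
          have h2 : (if h : (Fin.last r).val < r then g ⟨(Fin.last r).val, h⟩ else t) = t := by
            simp only [Fin.val_last]
            rw [dif_neg (lt_irrefl r)]
          rw [Finset.sum_congr rfl (fun j _ => h1 j), h2]
          exact htP

end Build

/-- Let `Δ̃⁺` be the positive roots of a polarization (given by a linear
functional `f` nonvanishing on roots) of a finite reduced crystallographic root
system `Δ`, with simple roots `ε₁,…,ε_n`.  If `α = ε_{i₁} + ⋯ + ε_{i_N} ∈ Δ̃⁺`,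
then for every `1 ≤ k ≤ N` there is a permutation `σ` of `{1,…,N}` with
`σ(1) = k` such that all partial sums `ε_{i_{σ(1)}} + ⋯ + ε_{i_{σ(r)}}` lie in
`Δ̃⁺`. -/
theorem simple_root_sum_reorder (Δ : Set V) (hΔ : IsRootSystem Δ)
    (f : V →ₗ[ℝ] ℝ) (hf : ∀ α ∈ Δ, f α ≠ 0)
    (P : Set V) (hP : P = {α | α ∈ Δ ∧ 0 < f α})
    {n N : ℕ} (hN : 0 < N) (ε : Fin n → V)
    (hsimple : ∀ j : Fin n, IsSimpleRoot P (ε j))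
    (i : Fin N → Fin n)
    (hα : (∑ j, ε (i j)) ∈ P) (k : Fin N) :
    ∃ σ : Equiv.Perm (Fin N), σ ⟨0, hN⟩ = k ∧
      ∀ r : Fin N,
        (∑ j ∈ Finset.univ.filter (fun j => j ≤ r), ε (i (σ j))) ∈ P := by
  obtain ⟨g, hg0, hgsum⟩ := build hΔ hf hP hsimple i hα k N hN le_rfl
  have hbij : Function.Bijective g := Finite.injective_iff_bijective.mp g.injective
  refine ⟨Equiv.ofBijective g hbij, ?_, ?_⟩
  · simpa [Equiv.ofBijective] using hg0
  · intro r
    simpa [Equiv.ofBijective] using hgsum r
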